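/- Let k be an algebraically closed field of characteristic 2, let n ≥ 1 and let e ∈ sl_{n+1}(k) be a nilpotent matrix. Then there exists h ∈ sl_{n+1}(k) with ⁅h,e⁆ = e if and only if n ≢ 1 (mod 4) or e has a Jordan block of odd size, i.e., there exists an odd integer j ≥ 1 with rank(e^{j−1}) + rank(e^{j+1}) > 2·rank(e^j). -/

import Mathlib

open Module

universe u

theorem jordan_exists {k : Type u} [Field k] (N : ℕ) :
    ∀ {V : Type u} [AddCommGroup V] [Module k V] [FiniteDimensional k V],
    Module.finrank k V = N → ∀ (f : Module.End k V), IsNilpotent f →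
    ∃ (ι : Type) (_ : Fintype ι) (s : ι → ℕ) (v : ι → V)
      (b : Basis ((B : ι) × Fin (s B)) k V),
      (∀ B, 0 < s B) ∧ (∀ B, (f ^ (s B)) (v B) = 0) ∧
      (∀ B (i : Fin (s B)), b ⟨B, i⟩ = (f ^ (i : ℕ)) (v B)) := by
  induction N using Nat.strong_induction_on with
  | _ N IH =>
  intro V _ _ _ hN f hf
  by_cases hf0 : f = 0
  · subst hf0
    let b0 : Basis (Fin N) k V := (Module.finBasis k V).reindex (finCongr hN)
    refine ⟨Fin N, inferInstance, fun _ => 1, b0,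
      b0.reindex (Equiv.sigmaUnique (Fin N) (fun _ => Fin 1)).symm,
      fun _ => one_pos, fun B => by simp, fun B i => by
        simp [Subsingleton.elim i 0]⟩
  · -- f ≠ 0
    have hker : LinearMap.ker f ≠ ⊥ := by
      intro h0
      obtain ⟨n, hn⟩ := hf
      have hinj : Function.Injective f := LinearMap.ker_eq_bot.mp h0
      have hinjn : Function.Injective (f ^ n) := by
        clear hn
        induction n with
        | zero => exact fun x y h => by simpa using h
        | succ n ih =>
          rw [pow_succ']
          exact hinj.comp ih
      have : Subsingleton V := by
        constructor
        intro x y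
        apply hinjn
        simp [hn]
      exact hf0 (LinearMap.ext fun x => Subsingleton.elim _ _)
    set W := LinearMap.range f with hW
    have hWle : ∀ x ∈ W, f x ∈ W := fun x _ => LinearMap.mem_range_self f x
    set f' : Module.End k ↥W := f.restrict hWle with hf'def
    have hcoe : ∀ (j : ℕ) (x : ↥W), (((f' ^ j) x : ↥W) : V) = (f ^ j) ↑x := by
      intro j x
      rw [hf'def, Module.End.pow_restrict, LinearMap.restrict_apply]
    have hker_pos : 0 < finrank k ↥(LinearMap.ker f) := by
      rw [Module.finrank_pos_iff]
      exact Submodule.nontrivial_iff_ne_bot.mpr hker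
    have hrn : finrank k ↥W + finrank k ↥(LinearMap.ker f) = N := by
      rw [← hN]; exact LinearMap.finrank_range_add_finrank_ker f
    have hWlt : finrank k ↥W < N := by omega
    have hf'nil : IsNilpotent f' := by
      obtain ⟨n, hn⟩ := hf
      exact ⟨n, by
        ext x
        have := hcoe n x
        rw [hn] at this
        simpa using (Subtype.ext this : ((f' ^ n) x) = 0)⟩
    obtain ⟨ι, _, s, v, bW, hpos, hann, hb⟩ := IH (finrank k ↥W) hWlt rfl f' hf'nil
    -- choose preimages of tops
    have hpre : ∀ B, ∃ u : V, f u = ↑(v B) := fun B => (v B).2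
    choose u hu using hpre
    -- bottoms
    have htop : ∀ B, s B - 1 < s B := fun B => by have := hpos B; omega
    set bot : ι → V := fun B => ↑(bW ⟨B, ⟨s B - 1, htop B⟩⟩) with hbot
    have hbotv : ∀ B, bot B = (f ^ (s B - 1)) ↑(v B) := by
      intro B
      rw [hbot]
      simp only [hb]
      exact hcoe _ _
    have hbotker : ∀ B, bot B ∈ LinearMap.ker f := by
      intro B
      rw [LinearMap.mem_ker, hbotv]
      have : f ((f ^ (s B - 1)) ↑(v B)) = (f ^ (s B - 1 + 1)) ↑(v B) := by
        rw [pow_succ']; rfl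
      rw [this]
      have hs : s B - 1 + 1 = s B := by have := hpos B; omega
      rw [hs]
      have := hcoe (s B) (v B)
      rw [hann] at this
      simpa using this.symm
    -- bottoms are linearly independent
    have li_bot : LinearIndependent k bot := by
      have h1 : LinearIndependent k (fun B : ι => bW ⟨B, ⟨s B - 1, htop B⟩⟩) :=
        bW.linearIndependent.comp _ (fun B C h => congrArg Sigma.fst h)
      exact h1.map' W.subtype (Submodule.ker_subtype W)
    set S : Submodule k V := Submodule.span k (Set.range bot) with hS
    have hSker : S ≤ LinearMap.ker f := by
      rw [hS, Submodule.span_le]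
      rintro x ⟨B, rfl⟩
      exact hbotker B
    obtain ⟨C0, hC0⟩ := Submodule.exists_isCompl S
    set C : Submodule k V := C0 ⊓ LinearMap.ker f with hC
    have hsupC : S ⊔ C = LinearMap.ker f := by
      rw [hC, ← sup_inf_assoc_of_le _ hSker, hC0.sup_eq_top, top_inf_eq]
    have hdisjC : S ⊓ C = ⊥ := by
      rw [hC, ← inf_assoc, hC0.inf_eq_bot, bot_inf_eq]
    have hrkS : finrank k ↥S = Fintype.card ι := finrank_span_eq_card li_bot
    set r := finrank k ↥C with hr
    have hrk_ker : Fintype.card ι + r = finrank k ↥(LinearMap.ker f) := by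
      have := Submodule.finrank_sup_add_finrank_inf_eq S C
      rw [hsupC, hdisjC] at this
      simp only [finrank_bot, add_zero] at this
      omega
    set vt : Fin r → V := fun t => ((Module.finBasis k ↥C) t : V) with hvt
    have li_vt : LinearIndependent k vt :=
      ((Module.finBasis k ↥C).linearIndependent).map' C.subtype (Submodule.ker_subtype C)
    have hvtC : ∀ t, vt t ∈ C := fun t => ((Module.finBasis k ↥C) t).2
    have hvtker : ∀ t, f (vt t) = 0 := by
      intro t
      have : vt t ∈ LinearMap.ker f := by
        rw [← hsupC]
        exact Submodule.mem_sup_right (hvtC t)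
      exact LinearMap.mem_ker.mp this
    -- new data
    set s' : ι ⊕ Fin r → ℕ := Sum.elim (fun B => s B + 1) (fun _ => 1) with hs'
    set v' : ι ⊕ Fin r → V := Sum.elim u vt with hv'
    set g : ((c : ι ⊕ Fin r) × Fin (s' c)) → V := fun x => (f ^ (x.2 : ℕ)) (v' x.1)
      with hg
    have hfup : ∀ B (j : ℕ), (f ^ (j + 1)) (u B) = (f ^ j) ↑(v B) := by
      intro B j
      rw [pow_succ]
      simp [hu B]
    have hann' : ∀ c, (f ^ (s' c)) (v' c) = 0 := by
      rintro (B | t)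
      · show (f ^ (s B + 1)) (u B) = 0
        rw [hfup B (s B)]
        have := hcoe (s B) (v B)
        rw [hann] at this
        simpa using this.symm
      · show (f ^ 1) (vt t) = 0
        simpa using hvtker t
    have h1W : finrank k ↥W = ∑ B, s B := by
      rw [Module.finrank_eq_card_basis bW, Fintype.card_sigma]
      simp
    have card_eq : Fintype.card ((c : ι ⊕ Fin r) × Fin (s' c)) = finrank k V := by
      have h2 : Fintype.card ((c : ι ⊕ Fin r) × Fin (s' c)) = (∑ B, (s B + 1)) + r := by
        rw [Fintype.card_sigma, Fintype.sum_sum_type]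
        simp [hs']
      have h3 : ∑ B, (s B + 1) = (∑ B, s B) + Fintype.card ι := by
        rw [Finset.sum_add_distrib]
        simp [Finset.card_univ]
      omega
    have hub : ∀ B, (f ^ (s B)) (u B) = bot B := by
      intro B
      rw [show s B = s B - 1 + 1 by have := hpos B; omega, hfup]
      exact (hbotv B).symm
    have li_g : LinearIndependent k g := by
      classical
      rw [Fintype.linearIndependent_iff]
      intro a hsum
      set ψ : V →ₗ[k] (((B : ι) × Fin (s B)) →₀ k) :=
        (bW.repr.toLinearMap).comp
          (f.codRestrict W (fun x => LinearMap.mem_range_self f x)) with hψ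
      have claim : ∀ (B₀ : ι) (i₀ : Fin (s B₀)) (x : (c : ι ⊕ Fin r) × Fin (s' c)),
          (ψ (g x)) ⟨B₀, i₀⟩ =
            if x = ⟨Sum.inl B₀, (i₀.castSucc : Fin (s B₀ + 1))⟩ then 1 else 0 := by
        intro B₀ i₀ x
        obtain ⟨c | t, i⟩ := x
        · have hfgx : f (g ⟨Sum.inl c, i⟩) = (f ^ (i : ℕ)) ↑(v c) := by
            show f ((f ^ (i : ℕ)) (u c)) = _
            rw [← Module.End.mul_apply, ← pow_succ', hfup]
          by_cases hlt : (i : ℕ) < s c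
          · have hw : (f.codRestrict W (fun x => LinearMap.mem_range_self f x))
                (g ⟨Sum.inl c, i⟩) = bW ⟨c, ⟨(i : ℕ), hlt⟩⟩ := by
              apply Subtype.ext
              rw [LinearMap.codRestrict_apply, hfgx, hb]
              exact (hcoe _ _).symm
            rw [hψ, LinearMap.comp_apply, hw]
            simp only [LinearEquiv.coe_toLinearMap, Basis.repr_self]
            rw [Finsupp.single_apply]
            by_cases hx : (⟨Sum.inl c, i⟩ : (c : ι ⊕ Fin r) × Fin (s' c)) =
                ⟨Sum.inl B₀, (i₀.castSucc : Fin (s B₀ + 1))⟩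
            · obtain ⟨h1, h2⟩ := Sigma.mk.inj_iff.mp hx
              obtain rfl : c = B₀ := Sum.inl.inj h1
              have h3 : i = (i₀.castSucc : Fin (s c + 1)) := eq_of_heq h2
              rw [if_pos, if_pos hx]
              exact Sigma.mk.inj_iff.mpr ⟨rfl, heq_of_eq (Fin.ext (by simp [h3]))⟩
            · rw [if_neg, if_neg hx]
              intro hcon
              apply hx
              obtain ⟨h1, h2⟩ := Sigma.mk.inj_iff.mp hcon
              obtain rfl : c = B₀ := h1
              have h3 : (⟨(i : ℕ), hlt⟩ : Fin (s c)) = i₀ := eq_of_heq h2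
              exact Sigma.mk.inj_iff.mpr ⟨rfl, heq_of_eq (Fin.ext (by simp [← h3]))⟩
          · have hival : (i : ℕ) = s c := by
              have h4 : (i : ℕ) < s c + 1 := i.isLt
              omega
            have hw0 : (f.codRestrict W (fun x => LinearMap.mem_range_self f x))
                (g ⟨Sum.inl c, i⟩) = 0 := by
              apply Subtype.ext
              rw [LinearMap.codRestrict_apply, hfgx, hival]
              have := hcoe (s c) (v c)
              rw [hann] at this
              simpa using this.symm
            rw [hψ, LinearMap.comp_apply, hw0]
            simp only [map_zero, Finsupp.coe_zero, Pi.zero_apply]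
            rw [if_neg]
            intro hcon
            obtain ⟨h1, h2⟩ := Sigma.mk.inj_iff.mp hcon
            obtain rfl : c = B₀ := Sum.inl.inj h1
            have h3 : i = (i₀.castSucc : Fin (s c + 1)) := eq_of_heq h2
            rw [h3] at hival
            simp only [Fin.coe_castSucc] at hival
            have := i₀.isLt
            omega
        · have hz : f (g ⟨Sum.inr t, i⟩) = 0 := by
            show f ((f ^ (i : ℕ)) (vt t)) = _
            have h5 : (i : ℕ) < 1 := i.isLt
            have : (i : ℕ) = 0 := by omega
            rw [this, pow_zero]
            simpa using hvtker t
          have hw0 : (f.codRestrict W (fun x => LinearMap.mem_range_self f x))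
              (g ⟨Sum.inr t, i⟩) = 0 := by
            apply Subtype.ext
            rw [LinearMap.codRestrict_apply, hz]
            rfl
          rw [hψ, LinearMap.comp_apply, hw0]
          simp only [map_zero, Finsupp.coe_zero, Pi.zero_apply]
          rw [if_neg]
          intro hcon
          exact absurd (congrArg Sigma.fst hcon) (by simp)
      have key1 : ∀ (B₀ : ι) (i₀ : Fin (s B₀)),
          a ⟨Sum.inl B₀, (i₀.castSucc : Fin (s B₀ + 1))⟩ = 0 := by
        intro B₀ i₀
        have h := congrArg ψ hsum
        rw [map_sum, map_zero] at h
        have h2 := congrArg (fun F => F ⟨B₀, i₀⟩) h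
        simp only [map_smul, Finsupp.coe_finset_sum, Finset.sum_apply, Finsupp.coe_smul,
          Pi.smul_apply, Finsupp.coe_zero, Pi.zero_apply, smul_eq_mul] at h2
        rw [Finset.sum_congr rfl (fun x _ => by rw [claim B₀ i₀ x])] at h2
        simpa [mul_ite, Finset.sum_ite_eq'] using h2
      have hsum2 : (∑ B, a ⟨Sum.inl B, (Fin.last (s B) : Fin (s B + 1))⟩ • bot B)
          + (∑ t : Fin r, a ⟨Sum.inr t, (0 : Fin 1)⟩ • vt t) = 0 := by
        rw [← hsum, ← Finset.univ_sigma_univ, Finset.sum_sigma, Fintype.sum_sum_type]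
        congr 1
        · apply Finset.sum_congr rfl
          intro B _
          show _ = ∑ i : Fin (s B + 1), a ⟨Sum.inl B, i⟩ • g ⟨Sum.inl B, i⟩
          rw [Fin.sum_univ_castSucc]
          have hz2 : (∑ i : Fin (s B), a ⟨Sum.inl B, i.castSucc⟩ • g ⟨Sum.inl B, i.castSucc⟩) = 0 :=
            Finset.sum_eq_zero (fun i _ => by rw [key1 B i, zero_smul])
          rw [hz2, zero_add]
          show a _ • bot B = a _ • g ⟨Sum.inl B, Fin.last (s B)⟩
          congr 1
          show bot B = (f ^ ((Fin.last (s B) : Fin (s B + 1)) : ℕ)) (u B)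
          rw [Fin.val_last, hub]
        · apply Finset.sum_congr rfl
          intro t _
          show _ = ∑ i : Fin 1, a ⟨Sum.inr t, i⟩ • g ⟨Sum.inr t, i⟩
          rw [Fin.sum_univ_one]
          rfl
      set X := ∑ B, a ⟨Sum.inl B, (Fin.last (s B) : Fin (s B + 1))⟩ • bot B with hX
      set Y := ∑ t : Fin r, a ⟨Sum.inr t, (0 : Fin 1)⟩ • vt t with hY
      have hXS : X ∈ S := Submodule.sum_mem _ (fun B _ =>
        Submodule.smul_mem _ _ (Submodule.subset_span ⟨B, rfl⟩))
      have hYC : Y ∈ C := Submodule.sum_mem _ (fun t _ =>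
        Submodule.smul_mem _ _ (hvtC t))
      have hXY : X = -Y := eq_neg_of_add_eq_zero_left hsum2
      have hX0 : X = 0 := by
        have hmem : X ∈ S ⊓ C := ⟨hXS, by rw [hXY]; exact neg_mem hYC⟩
        rw [hdisjC] at hmem
        exact hmem
      have hY0 : Y = 0 := by
        rw [hX0] at hXY
        simpa using hXY.symm
      have hcoefbot : ∀ B, a ⟨Sum.inl B, (Fin.last (s B) : Fin (s B + 1))⟩ = 0 :=
        Fintype.linearIndependent_iff.mp li_bot _ hX0
      have hcoefvt : ∀ t, a ⟨Sum.inr t, (0 : Fin 1)⟩ = 0 :=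
        Fintype.linearIndependent_iff.mp li_vt _ hY0
      rintro ⟨c | t, i⟩
      · by_cases hlt : (i : ℕ) < s c
        · have : i = ((⟨(i : ℕ), hlt⟩ : Fin (s c)).castSucc : Fin (s c + 1)) := Fin.ext rfl
          rw [this]
          exact key1 c ⟨(i : ℕ), hlt⟩
        · have hival : (i : ℕ) = s c := by
            have h4 : (i : ℕ) < s c + 1 := i.isLt
            omega
          have : i = (Fin.last (s c) : Fin (s c + 1)) := Fin.ext (by simpa using hival)
          rw [this]
          exact hcoefbot c
      · have h5 : (i : ℕ) < 1 := i.isLt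
        have : i = (0 : Fin 1) := Fin.ext (by simpa using Nat.lt_one_iff.mp h5)
        rw [this]
        exact hcoefvt t
    have : Nonempty ((c : ι ⊕ Fin r) × Fin (s' c)) := by
      rcases Nat.exists_eq_add_of_lt hker_pos with ⟨_, _⟩
      by_cases hι : Nonempty ι
      · obtain ⟨B⟩ := hι
        exact ⟨⟨Sum.inl B, ⟨0, by simp [hs']⟩⟩⟩
      · have hm0 : Fintype.card ι = 0 := by
          simp [Fintype.card_eq_zero_iff, not_nonempty_iff.mp hι]
        have : 0 < r := by omega
        exact ⟨⟨Sum.inr ⟨0, this⟩, ⟨0, by simp [hs']⟩⟩⟩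
    refine ⟨ι ⊕ Fin r, inferInstance, s', v',
      basisOfLinearIndependentOfCardEqFinrank li_g card_eq, ?_, hann', ?_⟩
    · rintro (B | t) <;> simp [hs']
    · intro B i
      rw [coe_basisOfLinearIndependentOfCardEqFinrank]

section JD

variable {k : Type u} [Field k] {V : Type u} [AddCommGroup V] [Module k V]
  {ι : Type} [Fintype ι] {s : ι → ℕ} {v : ι → V} {f : Module.End k V}

theorem jd_apply (hann : ∀ B, (f ^ (s B)) (v B) = 0)
    (b : Basis ((B : ι) × Fin (s B)) k V)
    (hb : ∀ B (i : Fin (s B)), b ⟨B, i⟩ = (f ^ (i : ℕ)) (v B))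
    (B : ι) (i : Fin (s B)) (j : ℕ) :
    (f ^ j) (b ⟨B, i⟩) =
      if h : (i : ℕ) + j < s B then b ⟨B, ⟨(i : ℕ) + j, h⟩⟩ else 0 := by
  rw [hb, ← Module.End.mul_apply, ← pow_add]
  split_ifs with h
  · rw [hb B ⟨(i : ℕ) + j, h⟩]
    show (f ^ (j + (i : ℕ))) (v B) = (f ^ ((i : ℕ) + j)) (v B)
    rw [add_comm]
  · have hj : j + (i : ℕ) = (j + (i : ℕ) - s B) + s B := by omega
    rw [hj, pow_add, Module.End.mul_apply, hann, map_zero]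

theorem jd_rank [FiniteDimensional k V] (hann : ∀ B, (f ^ (s B)) (v B) = 0)
    (b : Basis ((B : ι) × Fin (s B)) k V)
    (hb : ∀ B (i : Fin (s B)), b ⟨B, i⟩ = (f ^ (i : ℕ)) (v B)) (j : ℕ) :
    Module.finrank k (LinearMap.range (f ^ j) : Submodule k V) = ∑ B, (s B - j) := by
  classical
  set w : ((B : ι) × Fin (s B - j)) → V :=
    fun x => b ⟨x.1, ⟨(x.2 : ℕ) + j, by have := x.2.isLt; omega⟩⟩ with hw
  have hrange : LinearMap.range (f ^ j) = Submodule.span k (Set.range w) := by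
    rw [LinearMap.range_eq_map, ← b.span_eq, Submodule.map_span, ← Set.range_comp]
    apply le_antisymm
    · rw [Submodule.span_le]
      rintro x ⟨⟨B, i⟩, rfl⟩
      show (f ^ j) (b ⟨B, i⟩) ∈ _
      rw [jd_apply hann b hb]
      split_ifs with h
      · apply Submodule.subset_span
        exact ⟨⟨B, ⟨(i : ℕ), by omega⟩⟩, rfl⟩
      · exact Submodule.zero_mem _
    · rw [Submodule.span_le]
      rintro x ⟨⟨B, t⟩, rfl⟩
      apply Submodule.subset_span
      have hlt : (t : ℕ) < s B := by have := t.isLt; omega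
      refine ⟨⟨B, ⟨(t : ℕ), hlt⟩⟩, ?_⟩
      show (f ^ j) (b ⟨B, ⟨(t : ℕ), hlt⟩⟩) = w ⟨B, t⟩
      have h2 : w ⟨B, t⟩ = (f ^ ((t : ℕ) + j)) (v B) := hb B _
      rw [hb, h2, ← Module.End.mul_apply, ← pow_add, add_comm]
  rw [hrange]
  have hinj : Function.Injective
      (fun x : ((B : ι) × Fin (s B - j)) =>
        (⟨x.1, ⟨(x.2 : ℕ) + j, by have := x.2.isLt; omega⟩⟩ : (B : ι) × Fin (s B))) := by
    rintro ⟨B, t⟩ ⟨C, p⟩ hx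
    obtain ⟨h1, h2⟩ := Sigma.mk.inj_iff.mp hx
    obtain rfl : B = C := h1
    have h3 := eq_of_heq h2
    have h4 : (t : ℕ) + j = (p : ℕ) + j := by
      have := congrArg Fin.val h3
      simpa using this
    exact Sigma.mk.inj_iff.mpr ⟨rfl, heq_of_eq (Fin.ext (by omega))⟩
  have li : LinearIndependent k w := b.linearIndependent.comp _ hinj
  rw [finrank_span_eq_card li, Fintype.card_sigma]
  simp

theorem jd_h0 [FiniteDimensional k V] (hann : ∀ B, (f ^ (s B)) (v B) = 0)
    (b : Basis ((B : ι) × Fin (s B)) k V)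
    (hb : ∀ B (i : Fin (s B)), b ⟨B, i⟩ = (f ^ (i : ℕ)) (v B)) (c : ι → k) :
    ∃ h₀ : Module.End k V, h₀ * f - f * h₀ = f ∧
      LinearMap.trace k V h₀ = ∑ x : (B : ι) × Fin (s B), (c x.1 + ((x.2 : ℕ) : k)) := by
  classical
  set h₀ : Module.End k V :=
    b.constr k (fun x : (B : ι) × Fin (s B) => (c x.1 + ((x.2 : ℕ) : k)) • b x) with hh
  have happ : ∀ x : (B : ι) × Fin (s B), h₀ (b x) = (c x.1 + ((x.2 : ℕ) : k)) • b x := by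
    intro x
    rw [hh, Module.Basis.constr_basis]
  refine ⟨h₀, ?_, ?_⟩
  · apply b.ext
    rintro ⟨B, i⟩
    rw [LinearMap.sub_apply, Module.End.mul_apply, Module.End.mul_apply, happ ⟨B, i⟩]
    have hfb : f (b ⟨B, i⟩) =
        if h : (i : ℕ) + 1 < s B then b ⟨B, ⟨(i : ℕ) + 1, h⟩⟩ else 0 := by
      have := jd_apply hann b hb B i 1
      rwa [pow_one] at this
    rw [map_smul, hfb]
    split_ifs with h
    · rw [happ ⟨B, ⟨(i : ℕ) + 1, h⟩⟩]
      show (c B + (((i : ℕ) + 1 : ℕ) : k)) • _ - (c B + ((i : ℕ) : k)) • _ = _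
      rw [← sub_smul]
      have : (c B + (((i : ℕ) + 1 : ℕ) : k)) - (c B + ((i : ℕ) : k)) = 1 := by
        push_cast
        ring
      rw [this, one_smul]
    · simp
  · rw [LinearMap.trace_eq_matrix_trace k b, Matrix.trace]
    apply Finset.sum_congr rfl
    intro x _
    rw [Matrix.diag_apply, LinearMap.toMatrix_apply, happ x, map_smul]
    rw [Basis.repr_self]
    simp [Finsupp.single_apply]

theorem jd_comm_trace [FiniteDimensional k V] (hpos : ∀ B, 0 < s B)
    (hann : ∀ B, (f ^ (s B)) (v B) = 0)
    (b : Basis ((B : ι) × Fin (s B)) k V)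
    (hb : ∀ B (i : Fin (s B)), b ⟨B, i⟩ = (f ^ (i : ℕ)) (v B))
    (z : Module.End k V) (hz : z * f = f * z) :
    ∃ d : ι → k, LinearMap.trace k V z = ∑ B, (s B : k) * d B := by
  classical
  refine ⟨fun B => b.repr (z (v B)) ⟨B, ⟨0, hpos B⟩⟩, ?_⟩
  have key : ∀ (B : ι) (i : Fin (s B)) (x : V),
      b.repr ((f ^ (i : ℕ)) x) ⟨B, i⟩ = b.repr x ⟨B, ⟨0, hpos B⟩⟩ := by
    intro B i
    have hfun : (Finsupp.lapply (⟨B, i⟩ : (B : ι) × Fin (s B))).comp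
          ((b.repr : V →ₗ[k] ((B : ι) × Fin (s B)) →₀ k).comp ((f ^ (i : ℕ)) : V →ₗ[k] V)) =
        (Finsupp.lapply (⟨B, ⟨0, hpos B⟩⟩ : (B : ι) × Fin (s B))).comp
          (b.repr : V →ₗ[k] ((B : ι) × Fin (s B)) →₀ k) := by
      apply b.ext
      rintro ⟨C, l⟩
      simp only [LinearMap.comp_apply, Finsupp.lapply_apply, LinearEquiv.coe_coe]
      rw [jd_apply hann b hb]
      split_ifs with hlt
      · rw [Basis.repr_self, Basis.repr_self, Finsupp.single_apply, Finsupp.single_apply]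
        by_cases hc : (⟨C, l⟩ : (B : ι) × Fin (s B)) = ⟨B, ⟨0, hpos B⟩⟩
        · obtain ⟨h1, h2⟩ := Sigma.mk.inj_iff.mp hc
          obtain rfl : C = B := h1
          have h3 : (l : ℕ) = 0 := by
            have := congrArg Fin.val (eq_of_heq h2)
            simpa using this
          rw [if_pos hc, if_pos]
          exact Sigma.mk.inj_iff.mpr ⟨rfl, heq_of_eq (Fin.ext (by simp [h3]))⟩
        · rw [if_neg hc, if_neg]
          intro hcon
          apply hc
          obtain ⟨h1, h2⟩ := Sigma.mk.inj_iff.mp hcon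
          obtain rfl : C = B := h1
          have h3 : (l : ℕ) + (i : ℕ) = (i : ℕ) := by
            have := congrArg Fin.val (eq_of_heq h2)
            simpa using this
          exact Sigma.mk.inj_iff.mpr ⟨rfl, heq_of_eq (Fin.ext (by simp; omega))⟩
      · rw [Basis.repr_self, Finsupp.single_apply, map_zero]
        rw [Finsupp.coe_zero, Pi.zero_apply, if_neg]
        intro hcon
        apply hlt
        obtain ⟨h1, h2⟩ := Sigma.mk.inj_iff.mp hcon
        obtain rfl : C = B := h1
        have h3 : (l : ℕ) = 0 := by
          have := congrArg Fin.val (eq_of_heq h2)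
          simpa using this
        rw [h3]
        simpa using i.isLt
    intro x
    exact congrArg (fun F => F x) hfun
  rw [LinearMap.trace_eq_matrix_trace k b, Matrix.trace, ← Finset.univ_sigma_univ,
    Finset.sum_sigma]
  apply Finset.sum_congr rfl
  intro B _
  have hdiag : ∀ i : Fin (s B),
      Matrix.diag (LinearMap.toMatrix b b z) ⟨B, i⟩ = b.repr (z (v B)) ⟨B, ⟨0, hpos B⟩⟩ := by
    intro i
    rw [Matrix.diag_apply, LinearMap.toMatrix_apply, hb B i]
    have hcomm : z ((f ^ (i : ℕ)) (v B)) = (f ^ (i : ℕ)) (z (v B)) := by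
      have h4 : z * f ^ (i : ℕ) = f ^ (i : ℕ) * z :=
        Commute.pow_right (hz : Commute z f) (i : ℕ)
      calc z ((f ^ (i : ℕ)) (v B)) = (z * f ^ (i : ℕ)) (v B) := rfl
        _ = (f ^ (i : ℕ) * z) (v B) := by rw [h4]
        _ = (f ^ (i : ℕ)) (z (v B)) := rfl
    rw [hcomm, key B i]
  rw [Finset.sum_congr rfl (fun i _ => hdiag i), Finset.sum_const, Finset.card_univ,
    Fintype.card_fin, nsmul_eq_mul]

end JD

open LieAlgebra.SpecialLinear in
/-- For a nilpotent `e ∈ sl_{n+1}(k)`, `k` algebraically closed of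
characteristic 2, there exists `h ∈ sl_{n+1}(k)` with `⁅h,e⁆ = e` iff `n ≢ 1 (mod 4)`
or `e` has a Jordan block of odd size. -/
theorem stmt_6 (k : Type*) [Field k] [IsAlgClosed k] [CharP k 2]
    (n : ℕ) (hn : 1 ≤ n)
    (e : sl (Fin (n + 1)) k) (he : IsNilpotent e.val) :
    (∃ h : sl (Fin (n + 1)) k, ⁅h, e⁆ = e) ↔
      (¬ n % 4 = 1 ∨ ∃ j : ℕ, 1 ≤ j ∧ Odd j ∧
        2 * (e.val ^ j).rank < (e.val ^ (j - 1)).rank + (e.val ^ (j + 1)).rank) := by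
  classical
  have h2k : (2 : k) = 0 := CharTwo.two_eq_zero
  have hoddcast : ∀ m : ℕ, Odd m → (m : k) = 1 := by
    rintro m ⟨q, rfl⟩
    push_cast
    rw [h2k]
    ring
  have hevencast : ∀ m : ℕ, Even m → (m : k) = 0 := by
    rintro m hm
    exact (CharP.cast_eq_zero_iff k 2 m).mpr hm.two_dvd
  set A := e.val with hAdef
  have htrA : Matrix.trace A = 0 := e.2
  set f : Module.End k (Fin (n + 1) → k) := Matrix.toLinAlgEquiv' A with hfdef
  have hfnil : IsNilpotent f := by
    obtain ⟨n0, hn0⟩ := he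
    exact ⟨n0, by rw [hfdef, ← map_pow, hn0, map_zero]⟩
  obtain ⟨ι, _, s, v, b, hpos, hann, hb⟩ :=
    jordan_exists (Module.finrank k (Fin (n + 1) → k)) rfl f hfnil
  have hdim : Module.finrank k (Fin (n + 1) → k) = n + 1 := by simp
  have hsum_s : ∑ B, s B = n + 1 := by
    have h1 := Module.finrank_eq_card_basis b
    rw [hdim, Fintype.card_sigma] at h1
    simpa using h1.symm
  have hrank : ∀ j : ℕ, (A ^ j).rank = ∑ B, (s B - j) := by
    intro j
    have h1 : (A ^ j).mulVecLin = f ^ j := by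
      rw [hfdef, ← map_pow]
      exact LinearMap.ext fun w => by
        rw [Matrix.mulVecLin_apply, Matrix.toLinAlgEquiv'_apply]
    have h2 : (A ^ j).rank =
        Module.finrank k (LinearMap.range (A ^ j).mulVecLin : Submodule k (Fin (n+1) → k)) :=
      rfl
    rw [h2, h1, jd_rank hann b hb]
  -- block existence iff rank inequality
  have hblock : ∀ j : ℕ, 1 ≤ j → ((∃ B, s B = j) ↔
      2 * (∑ B, (s B - j)) < (∑ B, (s B - (j - 1))) + (∑ B, (s B - (j + 1)))) := by
    intro j hj
    rw [Finset.mul_sum, ← Finset.sum_add_distrib]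
    constructor
    · rintro ⟨B₀, hB₀⟩
      apply Finset.sum_lt_sum
      · intro B _
        have := hpos B
        omega
      · exact ⟨B₀, Finset.mem_univ B₀, by omega⟩
    · intro hlt
      by_contra hno
      push_neg at hno
      have : ∀ B ∈ Finset.univ, 2 * (s B - j) = (s B - (j - 1)) + (s B - (j + 1)) := by
        intro B _
        have := hno B
        omega
      rw [Finset.sum_congr rfl this] at hlt
      omega
  have hRHS : (∃ j : ℕ, 1 ≤ j ∧ Odd j ∧
      2 * (A ^ j).rank < (A ^ (j - 1)).rank + (A ^ (j + 1)).rank) ↔ ∃ B, Odd (s B) := by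
    constructor
    · rintro ⟨j, hj1, hjodd, hlt⟩
      rw [hrank, hrank, hrank] at hlt
      obtain ⟨B, hB⟩ := (hblock j hj1).mpr hlt
      exact ⟨B, hB ▸ hjodd⟩
    · rintro ⟨B, hB⟩
      have hj1 : 1 ≤ s B := hpos B
      refine ⟨s B, hj1, hB, ?_⟩
      rw [hrank, hrank, hrank]
      exact (hblock (s B) hj1).mp ⟨B, rfl⟩
  -- Gauss sums
  set G : ℕ → ℕ := fun m => ∑ i ∈ Finset.range m, i with hG
  have hGeven : ∀ t : ℕ, (G (2 * t) : k) = (t : k) := by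
    intro t
    rcases Nat.eq_zero_or_pos t with rfl | ht
    · simp [hG]
    · have h1 : G (2 * t) * 2 = (2 * t) * (2 * t - 1) := Finset.sum_range_id_mul_two (2 * t)
      have h2 : G (2 * t) = t * (2 * t - 1) := by
        have h3 : (2 * t) * (2 * t - 1) = (t * (2 * t - 1)) * 2 := by ring
        rw [h3] at h1
        omega
      rw [h2]
      push_cast
      have h4 : ((2 * t - 1 : ℕ) : k) = 1 := hoddcast _ ⟨t - 1, by omega⟩
      rw [h4, mul_one]
  -- trace formula rearrangement
  have htrace_formula : ∀ c : ι → k,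
      (∑ x : (B : ι) × Fin (s B), (c x.1 + ((x.2 : ℕ) : k))) =
        (∑ B, (s B : k) * c B) + ∑ B, ((G (s B) : ℕ) : k) := by
    intro c
    rw [← Finset.univ_sigma_univ, Finset.sum_sigma, ← Finset.sum_add_distrib]
    apply Finset.sum_congr rfl
    intro B _
    show (∑ i : Fin (s B), (c B + ((i : ℕ) : k))) = _
    rw [Finset.sum_add_distrib, Finset.sum_const, Finset.card_univ, Fintype.card_fin]
    congr 1
    · rw [nsmul_eq_mul]
    · rw [hG]
      push_cast
      exact Fin.sum_univ_eq_sum_range (fun i => ((i : ℕ) : k)) (s B)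
  -- trace bridge
  have htr : ∀ g : Module.End k (Fin (n + 1) → k),
      LinearMap.trace k _ g = Matrix.trace (LinearMap.toMatrix' g) := by
    intro g
    rw [LinearMap.trace_eq_matrix_trace k (Pi.basisFun k (Fin (n + 1))) g,
      LinearMap.toMatrix_eq_toMatrix']
  rw [hRHS]
  constructor
  · rintro ⟨h, hbr⟩
    by_contra hcon
    rw [not_or, not_not] at hcon
    obtain ⟨hn4, hnodd⟩ := hcon
    have heven : ∀ B, Even (s B) := by
      intro B
      rcases Nat.even_or_odd (s B) with h1 | h1
      · exact h1
      · exact absurd ⟨B, h1⟩ hnodd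
    choose m hm using fun B => (heven B)
    have hm2 : ∀ B, s B = 2 * m B := fun B => by have := hm B; omega
    -- matrix bracket to End bracket
    have hbrv : h.val * A - A * h.val = A := congrArg Subtype.val hbr
    set g : Module.End k (Fin (n + 1) → k) := Matrix.toLinAlgEquiv' h.val with hgdef
    have hgf : g * f - f * g = f := by
      rw [hgdef, hfdef, ← map_mul, ← map_mul, ← map_sub, hbrv]
    have htrg : LinearMap.trace k _ g = 0 := by
      rw [htr, hgdef]
      have hb2 : (Matrix.toLinAlgEquiv' h.val : Module.End k (Fin (n + 1) → k)) =
          Matrix.toLin' h.val :=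
        LinearMap.ext fun w => by rw [Matrix.toLinAlgEquiv'_apply, Matrix.toLin'_apply]
      rw [hb2, LinearMap.toMatrix'_toLin']
      exact h.2
    obtain ⟨h₀, hbr0, htr0⟩ := jd_h0 hann b hb (fun _ => (0 : k))
    have htr0' : LinearMap.trace k _ h₀ = ∑ B, ((G (s B) : ℕ) : k) := by
      rw [htr0, htrace_formula (fun _ => (0 : k))]
      simp
    set z := g - h₀ with hz
    have hzf : z * f = f * z := by
      have h1 : z * f - f * z = (g * f - f * g) - (h₀ * f - f * h₀) := by
        rw [hz, sub_mul, mul_sub]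
        abel
      rw [hgf, hbr0, sub_self] at h1
      have := sub_eq_zero.mp h1
      exact this
    obtain ⟨d, hd⟩ := jd_comm_trace hpos hann b hb z hzf
    have htrz : LinearMap.trace k _ z = 0 := by
      rw [hd]
      apply Finset.sum_eq_zero
      intro B _
      rw [hevencast _ (heven B), zero_mul]
    have hsplit : LinearMap.trace k _ g = LinearMap.trace k _ h₀ + LinearMap.trace k _ z := by
      rw [hz, map_sub]
      ring
    rw [htrg, htr0', htrz, add_zero] at hsplit
    -- compute the sum: equals (∑ m B : k), which is 1
    have hsum1 : (∑ B, ((G (s B) : ℕ) : k)) = ((∑ B, m B : ℕ) : k) := by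
      rw [Nat.cast_sum]
      apply Finset.sum_congr rfl
      intro B _
      rw [hm2 B, hGeven]
    have hModd : Odd (∑ B, m B) := by
      have h1 : 2 * (∑ B, m B) = n + 1 := by
        rw [Finset.mul_sum, ← hsum_s]
        exact Finset.sum_congr rfl (fun B _ => (hm2 B).symm)
      rw [Nat.odd_iff]
      omega
    rw [hsum1, hoddcast _ hModd] at hsplit
    exact one_ne_zero hsplit.symm
  · intro hR
    -- choose c
    have hkey : ∃ c : ι → k, (∑ B, (s B : k) * c B) + (∑ B, ((G (s B) : ℕ) : k)) = 0 := by
      by_cases hodd : ∃ B, Odd (s B)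
      · obtain ⟨B₀, hB₀⟩ := hodd
        set τ : k := ∑ B, ((G (s B) : ℕ) : k) with hτ
        refine ⟨fun B => if B = B₀ then τ else 0, ?_⟩
        have h1 : (∑ B, (s B : k) * (if B = B₀ then τ else 0)) = (s B₀ : k) * τ := by
          rw [Finset.sum_eq_single B₀]
          · simp
          · intro B _ hB
            simp [hB]
          · intro hB
            exact absurd (Finset.mem_univ B₀) hB
        rw [h1, hoddcast _ hB₀, one_mul]
        exact CharTwo.add_self_eq_zero τ
      · -- all even, n % 4 = 3
        have heven : ∀ B, Even (s B) := by
          intro B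
          rcases Nat.even_or_odd (s B) with h1 | h1
          · exact h1
          · exact absurd ⟨B, h1⟩ hodd
        have hn4 : ¬ n % 4 = 1 := by
          rcases hR with h1 | h1
          · exact h1
          · exact absurd h1 hodd
        choose m hm using fun B => (heven B)
        have hm2 : ∀ B, s B = 2 * m B := fun B => by have := hm B; omega
        have h1 : 2 * (∑ B, m B) = n + 1 := by
          rw [Finset.mul_sum, ← hsum_s]
          exact Finset.sum_congr rfl (fun B _ => (hm2 B).symm)
        have hneven : Even (n + 1) := ⟨∑ B, m B, by omega⟩
        have hMeven : Even (∑ B, m B) := by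
          rcases Nat.even_or_odd (∑ B, m B) with h2 | h2
          · exact h2
          · exfalso
            obtain ⟨q, hq⟩ := h2
            omega
        refine ⟨fun _ => 0, ?_⟩
        have h3 : (∑ B, (s B : k) * (0 : k)) = 0 := by simp
        rw [h3, zero_add]
        have h4 : (∑ B, ((G (s B) : ℕ) : k)) = ((∑ B, m B : ℕ) : k) := by
          rw [Nat.cast_sum]
          apply Finset.sum_congr rfl
          intro B _
          rw [hm2 B, hGeven]
        rw [h4]
        exact hevencast _ hMeven
    obtain ⟨c, hc⟩ := hkey
    obtain ⟨h₀, hbr0, htr0⟩ := jd_h0 hann b hb c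
    have htr0' : LinearMap.trace k _ h₀ = 0 := by
      rw [htr0, htrace_formula, hc]
    set H := LinearMap.toMatrix' h₀ with hH
    have hHf : Matrix.toLinAlgEquiv' H = h₀ := by
      have hb2 : (Matrix.toLinAlgEquiv' H : Module.End k (Fin (n + 1) → k)) =
          Matrix.toLin' H :=
        LinearMap.ext fun w => by rw [Matrix.toLinAlgEquiv'_apply, Matrix.toLin'_apply]
      rw [hb2, hH, Matrix.toLin'_toMatrix']
    have hTrH : Matrix.trace H = 0 := by
      rw [← htr h₀, htr0']
    have hmem : H ∈ sl (Fin (n + 1)) k := by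
      show H ∈ LinearMap.ker (Matrix.traceLinearMap (Fin (n + 1)) k k)
      rw [LinearMap.mem_ker]
      exact hTrH
    refine ⟨⟨H, hmem⟩, ?_⟩
    apply Subtype.ext
    show H * A - A * H = A
    apply (Matrix.toLinAlgEquiv' : Matrix (Fin (n+1)) (Fin (n+1)) k ≃ₐ[k] _).injective
    rw [map_sub, map_mul, map_mul, hHf, ← hfdef, hbr0]
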